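/- Let A be a Hermitian (or real symmetric) n×n matrix and f_1,…,f_k an orthonormal family of vectors such that (A f_i, f_i) ≥ λ for all i and (A f_i, f_j) = 0 whenever i ≠ j. Then A has at least k eigenvalues (counted with multiplicity) greater than or equal to λ. -/

import Mathlib

open Matrix

section helpers

variable {ι m : Type*} [Fintype ι] [Fintype m]

lemma dot_sum_smul (x : m → ℂ) (c : ι → ℂ) (g : ι → (m → ℂ)) :
    x ⬝ᵥ (∑ i, c i • g i) = ∑ i, c i * (x ⬝ᵥ g i) := by
  simp only [dotProduct, Finset.sum_apply, Pi.smul_apply, smul_eq_mul, Finset.mul_sum,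
    Finset.sum_mul]
  conv_lhs => rw [Finset.sum_comm]
  exact Finset.sum_congr rfl fun i _ => Finset.sum_congr rfl fun j _ => by ring

lemma star_sum_smul (c : ι → ℂ) (g : ι → (m → ℂ)) :
    star (∑ i, c i • g i) = ∑ i, star (c i) • star (g i) := by
  rw [star_sum]
  exact Finset.sum_congr rfl fun i _ => star_smul _ _

lemma sum_smul_dot (x : m → ℂ) (c : ι → ℂ) (g : ι → (m → ℂ)) :
    (∑ i, c i • g i) ⬝ᵥ x = ∑ i, c i * (g i ⬝ᵥ x) := by
  simp only [dotProduct, Finset.sum_apply, Pi.smul_apply, smul_eq_mul, Finset.mul_sum,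
    Finset.sum_mul]
  conv_lhs => rw [Finset.sum_comm]
  exact Finset.sum_congr rfl fun i _ => Finset.sum_congr rfl fun j _ => by ring

end helpers

/-- If `A` is a Hermitian `n × n` complex matrix and `f 1, …, f k` is an orthonormal family
with `⟨A f i, f i⟩ ≥ λ` for all `i` and `⟨A f i, f j⟩ = 0` for `i ≠ j`, then `A` has at least
`k` eigenvalues (with multiplicity) that are `≥ λ`. -/
theorem hermitian_count_eigenvalues_ge {n k : ℕ} (A : Matrix (Fin n) (Fin n) ℂ)
    (hA : A.IsHermitian) (lam : ℝ) (f : Fin k → (Fin n → ℂ))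
    (horth : ∀ i j, star (f i) ⬝ᵥ f j = if i = j then 1 else 0)
    (hdiag : ∀ i, lam ≤ (star (f i) ⬝ᵥ A.mulVec (f i)).re)
    (hoff : ∀ i j, i ≠ j → star (f i) ⬝ᵥ A.mulVec (f j) = 0) :
    k ≤ (Finset.univ.filter fun i => lam ≤ hA.eigenvalues i).card := by
  classical
  by_contra hcon
  push_neg at hcon
  set S := Finset.univ.filter (fun i => lam ≤ hA.eigenvalues i) with hSdef
  set B : Fin n → (Fin n → ℂ) := fun j => ⇑(hA.eigenvectorBasis j) with hBdef
  -- a nonzero coefficient vector orthogonal to all "large" eigenvectors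
  let L : (Fin k → ℂ) →ₗ[ℂ] (S → ℂ) :=
    { toFun := fun c s => star (B s.1) ⬝ᵥ (∑ i, c i • f i)
      map_add' := by
        intro c c'
        funext s
        simp [add_smul, Finset.sum_add_distrib, dotProduct_add]
      map_smul' := by
        intro a c
        funext s
        simp only [RingHom.id_apply, Pi.smul_apply, smul_eq_mul]
        rw [dot_sum_smul, dot_sum_smul, Finset.mul_sum]
        exact Finset.sum_congr rfl fun i _ => by ring }
  have hker : LinearMap.ker L ≠ ⊥ := by
    apply LinearMap.ker_ne_bot_of_finrank_lt (K := ℂ)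
    rw [Module.finrank_fin_fun, Module.finrank_pi]
    simpa using hcon
  obtain ⟨c, hcL, hc0⟩ := (Submodule.ne_bot_iff _).mp hker
  set w : Fin n → ℂ := ∑ i, c i • f i with hwdef
  have hS0 : ∀ j : Fin n, lam ≤ hA.eigenvalues j → star (B j) ⬝ᵥ w = 0 := by
    intro j hj
    have hjS : j ∈ S := by simp [hSdef, hj]
    exact congrFun (LinearMap.mem_ker.mp hcL) ⟨j, hjS⟩
  set d : Fin n → ℂ := fun j => star (B j) ⬝ᵥ w with hddef
  -- expansion of dot products against w on the left
  have hdotw : ∀ u : Fin n → ℂ, star w ⬝ᵥ u = ∑ i, star (c i) * (star (f i) ⬝ᵥ u) := by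
    intro u
    rw [hwdef, star_sum_smul, sum_smul_dot]
  -- norm identity, f-side
  have h2 : star w ⬝ᵥ w = ∑ i, star (c i) * c i := by
    rw [hdotw]
    refine Finset.sum_congr rfl fun i _ => ?_
    congr 1
    rw [hwdef, dot_sum_smul]
    simp [horth]
  -- quadratic form, f-side
  have hAw : A *ᵥ w = ∑ i, c i • (A *ᵥ f i) := by
    rw [hwdef, ← Matrix.mulVecLin_apply, map_sum]
    simp [Matrix.mulVecLin_apply]
  have h3 : star w ⬝ᵥ (A *ᵥ w) = ∑ i, star (c i) * c i * (star (f i) ⬝ᵥ (A *ᵥ f i)) := by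
    rw [hAw, hdotw]
    refine Finset.sum_congr rfl fun i _ => ?_
    rw [dot_sum_smul, Finset.sum_eq_single i
      (fun j _ hj => by rw [hoff i j (Ne.symm hj), mul_zero])
      (fun h => absurd (Finset.mem_univ i) h)]
    ring
  set t := ∑ i, Complex.normSq (c i) with htdef
  have ht_pos : 0 < t := by
    obtain ⟨i0, hi0⟩ := Function.ne_iff.mp hc0
    refine Finset.sum_pos' (fun i _ => Complex.normSq_nonneg _)
      ⟨i0, Finset.mem_univ _, Complex.normSq_pos.mpr (by simpa using hi0)⟩
  have hre2 : (star w ⬝ᵥ w).re = t := by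
    rw [h2, Complex.re_sum, htdef]
    refine Finset.sum_congr rfl fun i _ => ?_
    rw [Complex.star_def, mul_comm, Complex.mul_conj, Complex.ofReal_re]
  have hge : lam * t ≤ (star w ⬝ᵥ (A *ᵥ w)).re := by
    rw [h3, Complex.re_sum, htdef, Finset.mul_sum]
    refine Finset.sum_le_sum fun i _ => ?_
    have hrw : star (c i) * c i * (star (f i) ⬝ᵥ (A *ᵥ f i))
        = (Complex.normSq (c i) : ℂ) * (star (f i) ⬝ᵥ (A *ᵥ f i)) := by
      rw [Complex.star_def, mul_comm ((starRingEnd ℂ) (c i)), Complex.mul_conj]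
    rw [hrw, Complex.re_ofReal_mul, mul_comm lam]
    exact mul_le_mul_of_nonneg_left (hdiag i) (Complex.normSq_nonneg _)
  -- eigenvector side
  have hAb : ∀ j, A *ᵥ B j = (hA.eigenvalues j : ℂ) • B j := by
    intro j
    rw [hBdef]
    refine (hA.mulVec_eigenvectorBasis j).trans ?_
    ext x
    simp [Complex.real_smul]
  -- expand w in the eigenvector basis
  have hw_expand : w = ∑ j, d j • B j := by
    have h := hA.eigenvectorBasis.sum_repr'
      ((WithLp.equiv 2 (Fin n → ℂ)).symm w)
    have h2' := congrArg (WithLp.linearEquiv 2 ℂ (Fin n → ℂ)) h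
    rw [map_sum] at h2'
    have hinner : ∀ j, (inner ℂ (hA.eigenvectorBasis j)
        ((WithLp.equiv 2 (Fin n → ℂ)).symm w) : ℂ) = d j := by
      intro j
      rw [EuclideanSpace.inner_eq_star_dotProduct]
      simp [hddef, hBdef, dotProduct_comm]
    calc w = (WithLp.linearEquiv 2 ℂ (Fin n → ℂ))
          ((WithLp.equiv 2 (Fin n → ℂ)).symm w) := rfl
      _ = ∑ j, d j • B j := by
          rw [← h2']
          exact Finset.sum_congr rfl fun j _ => by rw [_root_.map_smul, hinner j]; rfl
  have hswB : ∀ j, star w ⬝ᵥ B j = star (d j) := by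
    intro j
    rw [Matrix.star_dotProduct]
  have h4 : star w ⬝ᵥ w = ∑ j, star (d j) * d j := by
    nth_rewrite 2 [hw_expand]
    rw [dot_sum_smul]
    exact Finset.sum_congr rfl fun j _ => by rw [hswB j]; ring
  have hAw2 : A *ᵥ w = ∑ j, ((hA.eigenvalues j : ℂ) * d j) • B j := by
    nth_rewrite 1 [hw_expand]
    rw [← Matrix.mulVecLin_apply, map_sum]
    refine Finset.sum_congr rfl fun j _ => ?_
    rw [_root_.map_smul, Matrix.mulVecLin_apply, hAb j, smul_smul, mul_comm (d j)]
  have h5 : star w ⬝ᵥ (A *ᵥ w) = ∑ j, (hA.eigenvalues j : ℂ) * (star (d j) * d j) := by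
    rw [hAw2, dot_sum_smul]
    refine Finset.sum_congr rfl fun j _ => ?_
    rw [hswB j]
    ring
  have hre4 : (star w ⬝ᵥ w).re = ∑ j, Complex.normSq (d j) := by
    rw [h4, Complex.re_sum]
    refine Finset.sum_congr rfl fun j _ => ?_
    rw [Complex.star_def, mul_comm, Complex.mul_conj, Complex.ofReal_re]
  have hre5 : (star w ⬝ᵥ (A *ᵥ w)).re = ∑ j, hA.eigenvalues j * Complex.normSq (d j) := by
    rw [h5, Complex.re_sum]
    refine Finset.sum_congr rfl fun j _ => ?_
    have : star (d j) * d j = (Complex.normSq (d j) : ℂ) := by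
      rw [Complex.star_def, mul_comm, Complex.mul_conj]
    rw [this, ← Complex.ofReal_mul, Complex.ofReal_re]
  have htd : ∑ j, Complex.normSq (d j) = t := by rw [← hre4, hre2]
  obtain ⟨j0, hj0⟩ : ∃ j, d j ≠ 0 := by
    by_contra h
    push_neg at h
    have : t = 0 := by rw [← htd]; simp [h]
    linarith
  have hj0S : ¬ lam ≤ hA.eigenvalues j0 := fun hle => hj0 (hS0 j0 hle)
  have hlt : ∑ j, hA.eigenvalues j * Complex.normSq (d j)
      < ∑ j, lam * Complex.normSq (d j) := by
    refine Finset.sum_lt_sum (fun j _ => ?_) ⟨j0, Finset.mem_univ _, ?_⟩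
    · by_cases hdj : d j = 0
      · simp [hdj]
      · have hne : ¬ lam ≤ hA.eigenvalues j := fun hle => hdj (hS0 j hle)
        exact mul_le_mul_of_nonneg_right (le_of_lt (not_le.mp hne)) (Complex.normSq_nonneg _)
    · exact mul_lt_mul_of_pos_right (not_le.mp hj0S) (Complex.normSq_pos.mpr hj0)
  rw [← Finset.mul_sum, htd] at hlt
  rw [hre5] at hge
  linarith
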